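/- Let D ⊂ ℝ^d be a compact set with finite positive Lebesgue measure, J = [0,T] with T > 0, (Ω, ℱ, ℙ) a probability space, and 1 ≤ p < ∞. Let w : Ω → L²(D×D), g : Ω → C⁰(J, L²(D)), v : Ω → L²(D) be strongly ℙ-measurable with K := ess sup_{ω∈Ω} ‖w(ω)‖_{L²(D×D)} < ∞, ∫_Ω ‖g(ω)‖_{C⁰}^p dℙ < ∞, and ∫_Ω ‖v(ω)‖₂^p dℙ < ∞. Let u : Ω → C¹(J, L²(D)) be strongly ℙ-measurable such that ℙ-a.s. u(ω)(0) = v(ω) and u(ω)'(t) = −u(ω)(t) + H(w(ω))(u(ω)(t)) + g(ω)(t) for all t ∈ J. Then ∫_Ω ‖u(ω)‖_{C⁰(J,L²(D))}^p dℙ(ω) ≤ 2^{p−1} e^{pTK} ( ∫_Ω ‖v(ω)‖₂^p dℙ(ω) + T^p ∫_Ω ‖g(ω)‖_{C⁰}^p dℙ(ω) ) < ∞. -/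

import Mathlib

open MeasureTheory Set intervalIntegral
open scoped ENNReal NNReal

lemma hs_bound {α : Type*} [MeasurableSpace α] {μ : Measure α} [SigmaFinite μ]
    (k : Lp ℝ 2 (μ.prod μ)) (z : Lp ℝ 2 μ) (f : Lp ℝ 2 μ)
    (hf : (f : α → ℝ) =ᵐ[μ] fun x => ∫ x', k (x, x') * z x' ∂μ) :
    ‖f‖ ≤ ‖k‖ * ‖z‖ := by
  obtain ⟨k', hk'm, hkk'⟩ := Lp.aestronglyMeasurable k
  have hk'meas : Measurable fun q : α × α => (‖k' q‖₊ : ℝ≥0∞) ^ (2:ℝ) :=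
    hk'm.measurable.nnnorm.coe_nnreal_ennreal.pow_const _
  set N : ℝ≥0∞ := ∫⁻ x', (‖z x'‖₊ : ℝ≥0∞) ^ (2:ℝ) ∂μ with hN
  set κ : α → ℝ≥0∞ := fun x => ∫⁻ x', (‖k' (x, x')‖₊ : ℝ≥0∞) ^ (2:ℝ) ∂μ with hκ
  have hκmeas : Measurable κ := hk'meas.lintegral_prod_right'
  have hslice : ∀ᵐ x ∂μ, (fun y => (k : α × α → ℝ) (x, y)) =ᵐ[μ] fun y => k' (x, y) :=
    Measure.ae_ae_eq_curry_of_prod hkk'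
  have step1 : ∀ᵐ x ∂μ, (‖(f : α → ℝ) x‖₊ : ℝ≥0∞) ^ (2:ℝ) ≤ κ x * N := by
    filter_upwards [hf, hslice] with x hfx hsx
    have h1 : (‖(f : α → ℝ) x‖₊ : ℝ≥0∞) ≤ ∫⁻ x', ‖k' (x, x') * z x'‖₊ ∂μ := by
      have heq : ∫ x', (k : α × α → ℝ) (x, x') * z x' ∂μ
          = ∫ x', k' (x, x') * z x' ∂μ :=
        integral_congr_ae (hsx.mono fun y hy => by simp only [hy])
      rw [hfx, heq]
      exact enorm_integral_le_lintegral_enorm _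
    have h2 : ∫⁻ x', ‖k' (x, x') * z x'‖₊ ∂μ ≤ (κ x) ^ (1/2:ℝ) * N ^ (1/2:ℝ) := by
      simp_rw [nnnorm_mul, ENNReal.coe_mul]
      exact ENNReal.lintegral_mul_le_Lp_mul_Lq μ ⟨by norm_num, by norm_num, by norm_num⟩
        ((hk'm.measurable.comp measurable_prodMk_left).nnnorm.coe_nnreal_ennreal.aemeasurable)
        ((Lp.aestronglyMeasurable z).enorm)
    calc (‖(f : α → ℝ) x‖₊ : ℝ≥0∞) ^ (2:ℝ) ≤ ((κ x) ^ (1/2:ℝ) * N ^ (1/2:ℝ)) ^ (2:ℝ) :=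
          ENNReal.rpow_le_rpow (h1.trans h2) (by norm_num)
      _ = κ x * N := by
          rw [ENNReal.mul_rpow_of_nonneg _ _ (by norm_num), ← ENNReal.rpow_mul,
            ← ENNReal.rpow_mul]
          norm_num
  have step2 : (∫⁻ x, (‖(f : α → ℝ) x‖₊ : ℝ≥0∞) ^ (2:ℝ) ∂μ) ≤
      (∫⁻ q, (‖(k : α × α → ℝ) q‖₊ : ℝ≥0∞) ^ (2:ℝ) ∂(μ.prod μ)) * N := by
    calc ∫⁻ x, (‖(f : α → ℝ) x‖₊ : ℝ≥0∞) ^ (2:ℝ) ∂μ ≤ ∫⁻ x, κ x * N ∂μ :=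
          lintegral_mono_ae step1
      _ = (∫⁻ x, κ x ∂μ) * N := lintegral_mul_const'' N hκmeas.aemeasurable
      _ = (∫⁻ q, (‖k' q‖₊ : ℝ≥0∞) ^ (2:ℝ) ∂(μ.prod μ)) * N := by
          rw [lintegral_prod _ hk'meas.aemeasurable]
      _ = (∫⁻ q, (‖(k : α × α → ℝ) q‖₊ : ℝ≥0∞) ^ (2:ℝ) ∂(μ.prod μ)) * N := by
          refine congrArg (· * N) (lintegral_congr_ae ?_)
          filter_upwards [hkk'] with q hq
          rw [hq]
  -- translate to eLpNorms
  have e2 : ((2:ℝ≥0∞)).toReal = (2:ℝ) := by norm_num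
  have ef : eLpNorm (f : α → ℝ) 2 μ
      = (∫⁻ x, (‖(f : α → ℝ) x‖₊ : ℝ≥0∞) ^ (2:ℝ) ∂μ) ^ (1/2:ℝ) := by
    rw [eLpNorm_eq_lintegral_rpow_enorm_toReal (by norm_num) (by norm_num), e2]; rfl
  have ek : eLpNorm (k : α × α → ℝ) 2 (μ.prod μ)
      = (∫⁻ q, (‖(k : α × α → ℝ) q‖₊ : ℝ≥0∞) ^ (2:ℝ) ∂(μ.prod μ)) ^ (1/2:ℝ) := by
    rw [eLpNorm_eq_lintegral_rpow_enorm_toReal (by norm_num) (by norm_num), e2]; rfl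
  have ez : eLpNorm (z : α → ℝ) 2 μ = N ^ (1/2:ℝ) := by
    rw [eLpNorm_eq_lintegral_rpow_enorm_toReal (by norm_num) (by norm_num), e2]; rfl
  have key : eLpNorm (f : α → ℝ) 2 μ ≤
      eLpNorm (k : α × α → ℝ) 2 (μ.prod μ) * eLpNorm (z : α → ℝ) 2 μ := by
    rw [ef, ek, ez, ← ENNReal.mul_rpow_of_nonneg _ _ (by norm_num : (0:ℝ) ≤ 1/2)]
    exact ENNReal.rpow_le_rpow step2 (by norm_num)
  rw [Lp.norm_def, Lp.norm_def, Lp.norm_def, ← ENNReal.toReal_mul]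
  exact ENNReal.toReal_mono (ENNReal.mul_ne_top (Lp.eLpNorm_ne_top k) (Lp.eLpNorm_ne_top z)) key

lemma pathwise {E : Type*} [NormedAddCommGroup E] [NormedSpace ℝ E] [CompleteSpace E]
    {T : ℝ} (hT : 0 < T) {K : ℝ} (hK : 0 ≤ K)
    (u g : C(Set.Icc (0:ℝ) T, E)) (v : E)
    (A : E →L[ℝ] E) (hA : ∀ x, ‖A x‖ ≤ K * ‖x‖)
    (h0 : u (Set.projIcc 0 T hT.le 0) = v)
    (hderiv : ∀ t ∈ Set.Icc (0:ℝ) T,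
      HasDerivWithinAt (fun s : ℝ => u (Set.projIcc 0 T hT.le s))
        (-(u (Set.projIcc 0 T hT.le t)) + A (u (Set.projIcc 0 T hT.le t)) +
          g (Set.projIcc 0 T hT.le t))
        (Set.Icc (0:ℝ) T) t) :
    ‖u‖ ≤ Real.exp (T * K) * (‖v‖ + T * ‖g‖) := by
  set U : ℝ → E := fun s => u (Set.projIcc 0 T hT.le s) with hU
  set G : ℝ → E := fun s => g (Set.projIcc 0 T hT.le s) with hG
  have hUc : Continuous U := u.continuous.comp continuous_projIcc
  have hGc : Continuous G := g.continuous.comp continuous_projIcc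
  set φ : ℝ → ℝ := fun s => ‖U s‖ with hφ
  have hφc : Continuous φ := hUc.norm
  have hφ0 : ∀ s, 0 ≤ φ s := fun s => norm_nonneg _
  set C : ℝ := ‖v‖ + T * ‖g‖ with hC
  have hC0 : 0 ≤ C := add_nonneg (norm_nonneg _) (mul_nonneg hT.le (norm_nonneg _))
  have hGle : ∀ s, ‖G s‖ ≤ ‖g‖ := fun s => g.norm_coe_le_norm _
  set f : ℝ → E := fun s => Real.exp s • U s with hfdef
  have hfc : Continuous f := Real.continuous_exp.smul hUc
  have hf' : ∀ t ∈ Set.Icc (0:ℝ) T,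
      HasDerivWithinAt f (Real.exp t • (A (U t) + G t)) (Set.Icc (0:ℝ) T) t := by
    intro t ht
    have h1 := (Real.hasDerivAt_exp t).hasDerivWithinAt.smul (hderiv t ht)
    convert h1 using 1
    · rfl
    simp only [smul_add, smul_neg]
    abel
  have hintg : Continuous fun s => Real.exp s • (A (U s) + G s) :=
    Real.continuous_exp.smul ((A.continuous.comp hUc).add hGc)
  -- mild estimate
  have mild : ∀ t ∈ Set.Icc (0:ℝ) T, φ t ≤ C + K * ∫ s in (0:ℝ)..t, φ s := by
    intro t ht
    obtain ⟨ht0, htT⟩ := ht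
    have key1 : ∫ s in (0:ℝ)..t, Real.exp s • (A (U s) + G s) = f t - f 0 := by
      apply integral_eq_sub_of_hasDeriv_right_of_le ht0 hfc.continuousOn
      · intro x hx
        have hxI : x ∈ Set.Icc (0:ℝ) T := ⟨hx.1.le, hx.2.le.trans htT⟩
        refine (hf' x hxI).mono_of_mem_nhdsWithin ?_
        have : Set.Ioc x T ∈ nhdsWithin x (Set.Ioi x) :=
          inter_mem_nhdsWithin _ (Iic_mem_nhds (lt_of_lt_of_le hx.2 htT))
        exact Filter.mem_of_superset this fun y hy => ⟨hx.1.le.trans hy.1.le, hy.2⟩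
      · exact (hintg.intervalIntegrable _ _)
    have hf0 : f 0 = v := by
      show Real.exp 0 • U 0 = v
      rw [Real.exp_zero, one_smul]; exact h0
    have hnorm : ‖f t‖ ≤ ‖v‖ + ∫ s in (0:ℝ)..t, Real.exp s * (K * φ s + ‖g‖) := by
      have h2 : ‖f t - f 0‖ ≤ ∫ s in (0:ℝ)..t, ‖Real.exp s • (A (U s) + G s)‖ := by
        rw [← key1]; exact intervalIntegral.norm_integral_le_integral_norm ht0
      have h3 : (∫ s in (0:ℝ)..t, ‖Real.exp s • (A (U s) + G s)‖)
          ≤ ∫ s in (0:ℝ)..t, Real.exp s * (K * φ s + ‖g‖) := by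
        apply intervalIntegral.integral_mono_on ht0
          (hintg.norm.intervalIntegrable _ _)
          ((Real.continuous_exp.mul ((continuous_const.mul hφc).add
            continuous_const)).intervalIntegrable _ _)
        intro s _
        rw [norm_smul, Real.norm_eq_abs, abs_of_pos (Real.exp_pos s)]
        apply mul_le_mul_of_nonneg_left _ (Real.exp_pos s).le
        exact (norm_add_le _ _).trans (add_le_add (hA _) (hGle s))
      calc ‖f t‖ ≤ ‖f 0‖ + ‖f t - f 0‖ := by
            simpa using norm_add_le (f 0) (f t - f 0)
        _ ≤ ‖v‖ + ∫ s in (0:ℝ)..t, Real.exp s * (K * φ s + ‖g‖) := by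
            rw [hf0] at h2 ⊢; exact add_le_add_right (h2.trans h3) _
    -- split the integral
    have hsplit : (∫ s in (0:ℝ)..t, Real.exp s * (K * φ s + ‖g‖))
        = K * (∫ s in (0:ℝ)..t, Real.exp s * φ s) + ‖g‖ * (Real.exp t - 1) := by
      have : (fun s => Real.exp s * (K * φ s + ‖g‖))
          = fun s => K * (Real.exp s * φ s) + ‖g‖ * Real.exp s := by
        funext s; ring
      rw [this, intervalIntegral.integral_add (f := fun s => K * (Real.exp s * φ s)) (g := fun s => ‖g‖ * Real.exp s)
          (((continuous_const.mul (Real.continuous_exp.mul hφc))).intervalIntegrable _ _)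
          ((continuous_const.mul Real.continuous_exp).intervalIntegrable _ _),
        intervalIntegral.integral_const_mul, intervalIntegral.integral_const_mul,
        integral_exp, Real.exp_zero]
    have hft : ‖f t‖ = Real.exp t * φ t := by
      rw [hfdef]; simp [norm_smul, abs_of_pos (Real.exp_pos t), hφ]
    have hmain : Real.exp t * φ t ≤
        ‖v‖ + K * (∫ s in (0:ℝ)..t, Real.exp s * φ s) + ‖g‖ * (Real.exp t - 1) := by
      rw [← hft]; rw [hsplit] at hnorm; linarith
    -- divide by exp t
    have hexp1 : ∀ s ∈ Set.Icc (0:ℝ) t, Real.exp (-t) * (Real.exp s * φ s) ≤ φ s := by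
      intro s hs
      have : Real.exp (-t) * Real.exp s ≤ 1 := by
        rw [← Real.exp_add]
        exact Real.exp_le_one_iff.2 (by linarith [hs.2])
      calc Real.exp (-t) * (Real.exp s * φ s) = (Real.exp (-t) * Real.exp s) * φ s := by ring
        _ ≤ 1 * φ s := mul_le_mul_of_nonneg_right this (hφ0 s)
        _ = φ s := one_mul _
    have hint2 : Real.exp (-t) * (∫ s in (0:ℝ)..t, Real.exp s * φ s)
        ≤ ∫ s in (0:ℝ)..t, φ s := by
      rw [← intervalIntegral.integral_const_mul]
      apply intervalIntegral.integral_mono_on ht0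
        ((continuous_const.mul (Real.continuous_exp.mul hφc)).intervalIntegrable _ _)
        (hφc.intervalIntegrable _ _)
      intro s hs
      exact hexp1 s hs
    have hexpnegt : Real.exp (-t) ≤ 1 := Real.exp_le_one_iff.2 (by linarith)
    have hexpt : 0 < Real.exp (-t) := Real.exp_pos _
    have h4 : φ t = Real.exp (-t) * (Real.exp t * φ t) := by
      rw [← mul_assoc, ← Real.exp_add]; simp
    have h5 : Real.exp (-t) * (Real.exp t - 1) ≤ t := by
      have := Real.add_one_le_exp (-t)
      have h6 : Real.exp (-t) * Real.exp t = 1 := by rw [← Real.exp_add]; simp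
      nlinarith [Real.exp_pos (-t)]
    have hIφ : 0 ≤ ∫ s in (0:ℝ)..t, φ s :=
      intervalIntegral.integral_nonneg ht0 (fun s _ => hφ0 s)
    calc φ t = Real.exp (-t) * (Real.exp t * φ t) := h4
      _ ≤ Real.exp (-t) * (‖v‖ + K * (∫ s in (0:ℝ)..t, Real.exp s * φ s)
            + ‖g‖ * (Real.exp t - 1)) :=
          mul_le_mul_of_nonneg_left hmain hexpt.le
      _ = Real.exp (-t) * ‖v‖ + K * (Real.exp (-t) * ∫ s in (0:ℝ)..t, Real.exp s * φ s)
            + ‖g‖ * (Real.exp (-t) * (Real.exp t - 1)) := by ring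
      _ ≤ ‖v‖ + K * (∫ s in (0:ℝ)..t, φ s) + ‖g‖ * T := by
          gcongr
          · calc Real.exp (-t) * ‖v‖ ≤ 1 * ‖v‖ :=
                mul_le_mul_of_nonneg_right hexpnegt (norm_nonneg _)
              _ = ‖v‖ := one_mul _
          · exact h5.trans htT
      _ = C + K * ∫ s in (0:ℝ)..t, φ s := by rw [hC]; ring
  -- Gronwall
  set Φ : ℝ → ℝ := fun t => ∫ s in (0:ℝ)..t, φ s with hΦ
  have hΦd : ∀ t : ℝ, HasDerivAt Φ (φ t) t := fun t =>
    intervalIntegral.integral_hasDerivAt_right (hφc.intervalIntegrable _ _)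
      hφc.aestronglyMeasurable.stronglyMeasurableAtFilter hφc.continuousAt
  have hΦc : Continuous Φ := by
    rw [continuous_iff_continuousAt]; exact fun t => (hΦd t).continuousAt
  have hΦnonneg : ∀ t ∈ Set.Icc (0:ℝ) T, 0 ≤ Φ t := fun t ht =>
    intervalIntegral.integral_nonneg ht.1 (fun s _ => hφ0 s)
  have gron : ∀ t ∈ Set.Icc (0:ℝ) T, ‖Φ t‖ ≤ gronwallBound 0 K C (t - 0) := by
    apply norm_le_gronwallBound_of_norm_deriv_right_le hΦc.continuousOn
      (fun x _ => (hΦd x).hasDerivWithinAt)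
    · simp [hΦ]
    · intro x hx
      have hx' : x ∈ Set.Icc (0:ℝ) T := ⟨hx.1, hx.2.le⟩
      rw [Real.norm_eq_abs, abs_of_nonneg (hφ0 x), Real.norm_eq_abs,
        abs_of_nonneg (hΦnonneg x hx')]
      linarith [mild x hx']
  have final : ∀ t ∈ Set.Icc (0:ℝ) T, φ t ≤ Real.exp (T * K) * C := by
    intro t ht
    have h1 : Φ t ≤ gronwallBound 0 K C t := by
      have := gron t ht
      rw [sub_zero] at this
      exact (le_abs_self _).trans this
    have h2 : φ t ≤ C + K * gronwallBound 0 K C t :=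
      (mild t ht).trans (by nlinarith [h1])
    rcases eq_or_lt_of_le hK with hK0 | hKpos
    · rw [← hK0] at h2 ⊢
      simpa using h2
    · rw [gronwallBound_of_K_ne_0 hKpos.ne'] at h2
      have h3 : C + K * (0 * Real.exp (K * t) + C / K * (Real.exp (K * t) - 1))
          = C * Real.exp (K * t) := by
        field_simp
        ring
      rw [h3] at h2
      calc φ t ≤ C * Real.exp (K * t) := h2
        _ ≤ C * Real.exp (T * K) := by
            apply mul_le_mul_of_nonneg_left _ hC0
            exact Real.exp_le_exp.2 (by nlinarith [ht.2])
        _ = Real.exp (T * K) * C := mul_comm _ _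
  rw [ContinuousMap.norm_le _ (mul_nonneg (Real.exp_pos _).le hC0)]
  intro x
  have := final x.1 x.2
  rw [hφ] at this
  simpa [hU, Set.projIcc_val] using this

/-- `Lᵖ`-estimate for the linear neural field with random data: with
`K = ess sup ‖w‖ < ∞` and `p`-integrable `g, v`, any strongly measurable `C¹`-solution `u`
satisfies `∫ ‖u‖_{C⁰}^p dℙ ≤ 2^{p−1} e^{pTK} (∫ ‖v‖₂^p dℙ + T^p ∫ ‖g‖_{C⁰}^p dℙ) < ∞`. -/
theorem stmt16 (d : ℕ) (D : Set (EuclideanSpace ℝ (Fin d)))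
    (hD : IsCompact D) (hpos : 0 < volume D) (hfin : volume D < ⊤)
    (T : ℝ) (hT : 0 < T)
    (Ω : Type*) [MeasurableSpace Ω] (ℙ : Measure Ω) [IsProbabilityMeasure ℙ]
    (p : ℝ) (hp : 1 ≤ p)
    (HH : Lp ℝ 2 ((volume.restrict D).prod (volume.restrict D)) →
      (Lp ℝ 2 (volume.restrict D) →L[ℝ] Lp ℝ 2 (volume.restrict D)))
    (hHH : ∀ kk (z : Lp ℝ 2 (volume.restrict D)),
      (HH kk z : _ → ℝ) =ᵐ[volume.restrict D]
        fun x => ∫ x', kk (x, x') * z x' ∂(volume.restrict D))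
    (w : Ω → Lp ℝ 2 ((volume.restrict D).prod (volume.restrict D)))
    (hw : AEStronglyMeasurable w ℙ)
    (hK : essSup (fun ω => (‖w ω‖₊ : ℝ≥0∞)) ℙ < ⊤)
    (g : Ω → C(Set.Icc (0:ℝ) T, Lp ℝ 2 (volume.restrict D)))
    (hg : AEStronglyMeasurable g ℙ)
    (hgp : ∫⁻ ω, (‖g ω‖₊ : ℝ≥0∞) ^ p ∂ℙ < ⊤)
    (v : Ω → Lp ℝ 2 (volume.restrict D)) (hv : AEStronglyMeasurable v ℙ)
    (hvp : ∫⁻ ω, (‖v ω‖₊ : ℝ≥0∞) ^ p ∂ℙ < ⊤)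
    (u : Ω → C(Set.Icc (0:ℝ) T, Lp ℝ 2 (volume.restrict D)))
    (humeas : AEStronglyMeasurable u ℙ)
    (husol : ∀ᵐ ω ∂ℙ,
      u ω (Set.projIcc 0 T hT.le 0) = v ω ∧
      ∀ t ∈ Set.Icc (0:ℝ) T,
        HasDerivWithinAt (fun s : ℝ => u ω (Set.projIcc 0 T hT.le s))
          (-(u ω (Set.projIcc 0 T hT.le t)) +
            HH (w ω) (u ω (Set.projIcc 0 T hT.le t)) +
            g ω (Set.projIcc 0 T hT.le t))
          (Set.Icc (0:ℝ) T) t) :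
    ∫⁻ ω, (‖u ω‖₊ : ℝ≥0∞) ^ p ∂ℙ ≤
      ENNReal.ofReal (2 ^ (p - 1) *
          Real.exp (p * T * (essSup (fun ω => (‖w ω‖₊ : ℝ≥0∞)) ℙ).toReal)) *
        (∫⁻ ω, (‖v ω‖₊ : ℝ≥0∞) ^ p ∂ℙ + ENNReal.ofReal (T ^ p) * ∫⁻ ω, (‖g ω‖₊ : ℝ≥0∞) ^ p ∂ℙ) ∧
    ∫⁻ ω, (‖u ω‖₊ : ℝ≥0∞) ^ p ∂ℙ < ⊤ := by
  have hp0 : (0:ℝ) ≤ p := zero_le_one.trans hp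
  haveI : IsFiniteMeasure (volume.restrict D) :=
    ⟨by rwa [Measure.restrict_apply_univ]⟩
  set S := essSup (fun ω => (‖w ω‖₊ : ℝ≥0∞)) ℙ with hS
  set K := S.toReal with hKdef
  have hK0 : 0 ≤ K := ENNReal.toReal_nonneg
  have hwa : ∀ᵐ ω ∂ℙ, ‖w ω‖ ≤ K := by
    filter_upwards [ENNReal.ae_le_essSup (fun ω => (‖w ω‖₊ : ℝ≥0∞))] with ω hω
    have := ENNReal.toReal_mono hK.ne hω
    simpa using this
  -- pathwise bound
  have pathBound : ∀ᵐ ω ∂ℙ, ‖u ω‖ ≤ Real.exp (T * K) * (‖v ω‖ + T * ‖g ω‖) := by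
    filter_upwards [husol, hwa] with ω hsol hwω
    refine pathwise hT hK0 (u ω) (g ω) (v ω) (HH (w ω)) ?_ hsol.1 hsol.2
    intro x
    exact (hs_bound (w ω) x (HH (w ω) x) (hHH (w ω) x)).trans
      (mul_le_mul_of_nonneg_right hwω (norm_nonneg x))
  set Cp : ℝ≥0∞ := ENNReal.ofReal (2 ^ (p - 1) * Real.exp (p * T * K)) with hCp
  have hCpne : Cp ≠ ⊤ := ENNReal.ofReal_ne_top
  have hTe : ENNReal.ofReal (T ^ p) ≠ ⊤ := ENNReal.ofReal_ne_top
  -- pointwise ENNReal bound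
  have ptwise : ∀ᵐ ω ∂ℙ, (‖u ω‖₊ : ℝ≥0∞) ^ p ≤
      Cp * ((‖v ω‖₊ : ℝ≥0∞) ^ p + ENNReal.ofReal (T ^ p) * (‖g ω‖₊ : ℝ≥0∞) ^ p) := by
    filter_upwards [pathBound] with ω hb
    have h1 : (‖u ω‖₊ : ℝ≥0∞) ≤
        ENNReal.ofReal (Real.exp (T * K)) * ((‖v ω‖₊ : ℝ≥0∞) + ENNReal.ofReal T * ‖g ω‖₊) := by
      rw [← enorm_eq_nnnorm, ← enorm_eq_nnnorm, ← enorm_eq_nnnorm]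
      rw [← ofReal_norm, ← ofReal_norm,
        ← ofReal_norm, ← ENNReal.ofReal_mul hT.le, ← ENNReal.ofReal_add
          (norm_nonneg _) (mul_nonneg hT.le (norm_nonneg _)),
        ← ENNReal.ofReal_mul (Real.exp_pos _).le]
      exact ENNReal.ofReal_le_ofReal hb
    calc (‖u ω‖₊ : ℝ≥0∞) ^ p
        ≤ (ENNReal.ofReal (Real.exp (T * K)) *
            ((‖v ω‖₊ : ℝ≥0∞) + ENNReal.ofReal T * ‖g ω‖₊)) ^ p :=
          ENNReal.rpow_le_rpow h1 hp0
      _ = ENNReal.ofReal (Real.exp (T * K)) ^ p *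
            ((‖v ω‖₊ : ℝ≥0∞) + ENNReal.ofReal T * ‖g ω‖₊) ^ p :=
          ENNReal.mul_rpow_of_nonneg _ _ hp0
      _ ≤ ENNReal.ofReal (Real.exp (T * K)) ^ p *
            ((2:ℝ≥0∞) ^ (p - 1) * ((‖v ω‖₊ : ℝ≥0∞) ^ p + (ENNReal.ofReal T * ‖g ω‖₊) ^ p)) :=
          mul_le_mul_right (ENNReal.rpow_add_le_mul_rpow_add_rpow _ _ hp) _
      _ = Cp * ((‖v ω‖₊ : ℝ≥0∞) ^ p + ENNReal.ofReal (T ^ p) * (‖g ω‖₊ : ℝ≥0∞) ^ p) := by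
          rw [ENNReal.mul_rpow_of_nonneg _ _ hp0,
            ENNReal.ofReal_rpow_of_nonneg hT.le hp0, ← mul_assoc]
          congr 1
          rw [hCp, ENNReal.ofReal_mul (by positivity),
            ENNReal.ofReal_rpow_of_pos (Real.exp_pos _),
            show Real.exp (T * K) ^ p = Real.exp (p * T * K) by
              rw [← Real.exp_mul]; ring_nf,
            ← ENNReal.ofReal_rpow_of_pos two_pos, ENNReal.ofReal_ofNat]
          ring
  have hXmeas : AEMeasurable (fun ω => (‖v ω‖₊ : ℝ≥0∞) ^ p) ℙ :=
    hv.enorm.pow_const _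
  have main : ∫⁻ ω, (‖u ω‖₊ : ℝ≥0∞) ^ p ∂ℙ ≤
      Cp * (∫⁻ ω, (‖v ω‖₊ : ℝ≥0∞) ^ p ∂ℙ +
        ENNReal.ofReal (T ^ p) * ∫⁻ ω, (‖g ω‖₊ : ℝ≥0∞) ^ p ∂ℙ) := by
    calc ∫⁻ ω, (‖u ω‖₊ : ℝ≥0∞) ^ p ∂ℙ
        ≤ ∫⁻ ω, Cp * ((‖v ω‖₊ : ℝ≥0∞) ^ p + ENNReal.ofReal (T ^ p) * (‖g ω‖₊ : ℝ≥0∞) ^ p) ∂ℙ :=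
          lintegral_mono_ae ptwise
      _ = Cp * ∫⁻ ω, ((‖v ω‖₊ : ℝ≥0∞) ^ p + ENNReal.ofReal (T ^ p) * (‖g ω‖₊ : ℝ≥0∞) ^ p) ∂ℙ :=
          lintegral_const_mul' _ _ hCpne
      _ = Cp * (∫⁻ ω, (‖v ω‖₊ : ℝ≥0∞) ^ p ∂ℙ +
            ∫⁻ ω, ENNReal.ofReal (T ^ p) * (‖g ω‖₊ : ℝ≥0∞) ^ p ∂ℙ) := by
          rw [lintegral_add_left' hXmeas]
      _ = Cp * (∫⁻ ω, (‖v ω‖₊ : ℝ≥0∞) ^ p ∂ℙ +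
            ENNReal.ofReal (T ^ p) * ∫⁻ ω, (‖g ω‖₊ : ℝ≥0∞) ^ p ∂ℙ) := by
          rw [lintegral_const_mul' _ _ hTe]
  refine ⟨main, ?_⟩
  exact main.trans_lt (ENNReal.mul_lt_top hCpne.lt_top
    (ENNReal.add_lt_top.2 ⟨hvp, ENNReal.mul_lt_top hTe.lt_top hgp⟩))
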